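/- The map sending a subset A of {1,...,n-1} to the sum of its elements is the rank function of the lattice F_n^∞; in particular the maximal rank (the rank of the lattice F_n^∞) is n(n-1)/2. Moreover, complementation A ↦ {1,...,n-1} \ A is an order-reversing involution on F_n^∞: A is covered by B if and only if the complement of B is covered by the complement of A. -/

import Mathlib

/-- The cover relation of the lattice `F_n^∞` realized on the power set of `{1,…,n-1}`:
`A ⋖ B` iff either `1 ∉ A` and `B = A ∪ {1}`, or `B = (A \ {x}) ∪ {x+1}` for some
`x ∈ A` with `x + 1 ∉ A`. -/
def SubsetCov (n : ℕ) (A B : Finset ℕ) : Prop :=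
  A ⊆ Finset.Icc 1 (n - 1) ∧ B ⊆ Finset.Icc 1 (n - 1) ∧
    ((1 ∉ A ∧ B = insert 1 A) ∨
      ∃ x ∈ A, x + 1 ∉ A ∧ B = insert (x + 1) (A.erase x))

lemma subsetcov_compl {n : ℕ} {A B : Finset ℕ} (h : SubsetCov n A B) :
    SubsetCov n (Finset.Icc 1 (n - 1) \ B) (Finset.Icc 1 (n - 1) \ A) := by
  obtain ⟨hA, hB, hcase⟩ := h
  refine ⟨Finset.sdiff_subset, Finset.sdiff_subset, ?_⟩
  rcases hcase with ⟨h1, rfl⟩ | ⟨x, hx, hx1, rfl⟩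
  · left
    have h1I : (1 : ℕ) ∈ Finset.Icc 1 (n - 1) := hB (Finset.mem_insert_self 1 A)
    constructor
    · simp
    · ext y
      simp only [Finset.mem_sdiff, Finset.mem_insert]
      constructor
      · rintro ⟨hy, hyA⟩
        by_cases hy1 : y = 1
        · exact Or.inl hy1
        · exact Or.inr ⟨hy, by tauto⟩
      · rintro (rfl | ⟨hy, hyB⟩)
        · exact ⟨h1I, h1⟩
        · exact ⟨hy, fun hc => hyB (Or.inr hc)⟩
  · right
    refine ⟨x, ?_, ?_, ?_⟩
    · refine Finset.mem_sdiff.2 ⟨hA hx, ?_⟩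
      simp only [Finset.mem_insert, Finset.mem_erase]
      push_neg
      exact ⟨by omega, fun h => absurd hx (by tauto)⟩
    · simp
    · have hxI : x + 1 ∈ Finset.Icc 1 (n - 1) := hB (Finset.mem_insert_self _ _)
      have hxI' : x ∈ Finset.Icc 1 (n - 1) := hA hx
      ext y
      simp only [Finset.mem_sdiff, Finset.mem_insert, Finset.mem_erase]
      constructor
      · rintro ⟨hy, hyA⟩
        by_cases hy1 : y = x + 1
        · exact Or.inl hy1
        · have hyx : y ≠ x := fun hc => hyA (hc ▸ hx)
          exact Or.inr ⟨hyx, hy, by push_neg; exact ⟨hy1, fun _ => hyA⟩⟩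
      · rintro (rfl | ⟨hyx, hy, hyB⟩)
        · exact ⟨hxI, hx1⟩
        · refine ⟨hy, fun hc => hyB ?_⟩
          exact Or.inr ⟨hyx, hc⟩


/-- The map `A ↦ Σ_{x∈A} x` is the rank function of `F_n^∞` (it increases by one along
covers); the maximal rank is `n(n-1)/2`; and complementation is an order-reversing
involution: `A ⋖ B ↔ Bᶜ ⋖ Aᶜ`. -/
theorem stmt18 (n : ℕ) :
    (∀ A B : Finset ℕ, SubsetCov n A B → ∑ x ∈ B, x = (∑ x ∈ A, x) + 1) ∧
    (∑ x ∈ Finset.Icc 1 (n - 1), x = n * (n - 1) / 2) ∧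
    (∀ A B : Finset ℕ, A ⊆ Finset.Icc 1 (n - 1) → B ⊆ Finset.Icc 1 (n - 1) →
      (SubsetCov n A B ↔
        SubsetCov n (Finset.Icc 1 (n - 1) \ B) (Finset.Icc 1 (n - 1) \ A))) := by
  refine ⟨?_, ?_, ?_⟩
  · rintro A B ⟨hA, hB, ⟨h1, rfl⟩ | ⟨x, hx, hx1, rfl⟩⟩
    · rw [Finset.sum_insert h1]; omega
    · have hxe : x + 1 ∉ A.erase x := fun h => hx1 (Finset.mem_of_mem_erase h)
      rw [Finset.sum_insert hxe]
      have := Finset.add_sum_erase A id hx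
      simp only [id] at this
      omega
  · rcases Nat.eq_zero_or_pos n with rfl | hn
    · simp
    · have h0 : Finset.range n = insert 0 (Finset.Icc 1 (n - 1)) := by
        ext y; simp [Finset.mem_range]; omega
      have h2 : ∑ x ∈ Finset.range n, x = ∑ x ∈ Finset.Icc 1 (n - 1), x := by
        rw [h0, Finset.sum_insert (by simp)]; omega
      rw [← h2, Finset.sum_range_id, Nat.mul_comm]
  · intro A B hA hB
    constructor
    · exact subsetcov_compl
    · intro h
      have := subsetcov_compl h
      rwa [Finset.sdiff_sdiff_eq_self hA, Finset.sdiff_sdiff_eq_self hB] at this
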